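/- arXiv:1805.08134 — 3 statements merged into one kernel-verified Lean document; each statement's English description precedes it below -/
import Mathlib

section
/- Let S be a minimally spanning set and fix a positive definite prior Σ⁰. For each t ∈ ℕ let W(t) := min{ V_{Σ⁰}(q) : q ∈ ℕ^N, q_i = 0 for all i ∉ S, Σᵢ qᵢ = t }. Then t·W(t) → φ(S)² as t → ∞; that is, under optimal sampling restricted to S, the minimum achievable posterior variance after t observations is asymptotic to φ(S)²/t. -/
open Matrix Finset Filter Topology

noncomputable section

namespace LearningTraps

variable {K N : ℕ}

/-- The information matrix `Σᵢ qᵢ · cᵢ cᵢᵀ`. -/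
def infoMat (c : Fin N → Fin K → ℝ) (q : Fin N → ℝ) : Matrix (Fin K) (Fin K) ℝ :=
  ∑ i, q i • Matrix.vecMulVec (c i) (c i)

/-- Posterior variance `V_Σ(q) = [(Σ⁻¹ + Σᵢ qᵢ cᵢcᵢᵀ)⁻¹]₁₁`. -/
def postVar (hK : 0 < K) (c : Fin N → Fin K → ℝ)
    (Cov : Matrix (Fin K) (Fin K) ℝ) (q : Fin N → ℝ) : ℝ :=
  (Cov⁻¹ + infoMat c q)⁻¹ ⟨0, hK⟩ ⟨0, hK⟩

/-- Posterior variance at integer signal counts. -/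
def pv (hK : 0 < K) (c : Fin N → Fin K → ℝ)
    (Cov : Matrix (Fin K) (Fin K) ℝ) (q : Fin N → ℕ) : ℝ :=
  postVar hK c Cov fun i => (q i : ℝ)

/-- First standard basis vector of `ℝ^K`. -/
def e1 (hK : 0 < K) : Fin K → ℝ := Pi.single ⟨0, hK⟩ 1

/-- `S` is spanning: `e₁` lies in the span of `{cᵢ : i ∈ S}`. -/
def Spanning (hK : 0 < K) (c : Fin N → Fin K → ℝ) (S : Finset (Fin N)) : Prop :=
  e1 hK ∈ Submodule.span ℝ (c '' ↑S)

/-- `S` is minimally spanning. -/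
def MinSpanning (hK : 0 < K) (c : Fin N → Fin K → ℝ) (S : Finset (Fin N)) : Prop :=
  Spanning hK c S ∧ ∀ T ⊂ S, ¬ Spanning hK c T

/-- `β` represents `e₁` using only signals in `S`. -/
def IsRep (hK : 0 < K) (c : Fin N → Fin K → ℝ) (S : Finset (Fin N)) (β : Fin N → ℝ) : Prop :=
  (∀ i ∉ S, β i = 0) ∧ ∑ i, β i • c i = e1 hK

open Classical in
/-- The coefficients `β^S` (unique when `S` is minimally spanning). -/
def betaVec (hK : 0 < K) (c : Fin N → Fin K → ℝ) (S : Finset (Fin N)) : Fin N → ℝ :=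
  if h : ∃ β, IsRep hK c S β then h.choose else 0

/-- `φ(S) = Σ_{i∈S} |β^S_i|`. -/
def phi (hK : 0 < K) (c : Fin N → Fin K → ℝ) (S : Finset (Fin N)) : ℝ :=
  ∑ i, |betaVec hK c S i|

/-- The frequency vector `λ^S`. -/
def freq (hK : 0 < K) (c : Fin N → Fin K → ℝ) (S : Finset (Fin N)) : Fin N → ℝ :=
  fun i => |betaVec hK c S i| / phi hK c S

/-- The Unique Minimizer assumption: `Sstar` is the unique minimizer of `φ`
among minimally spanning sets. -/
def UniqueMin (hK : 0 < K) (c : Fin N → Fin K → ℝ) (Sstar : Finset (Fin N)) : Prop :=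
  MinSpanning hK c Sstar ∧
    ∀ S, MinSpanning hK c S → S ≠ Sstar → phi hK c Sstar < phi hK c S

/-- A `t`-optimal division of observations. -/
def TOptimal (hK : 0 < K) (c : Fin N → Fin K → ℝ) (Cov : Matrix (Fin K) (Fin K) ℝ)
    (t : ℕ) (q : Fin N → ℕ) : Prop :=
  (∑ i, q i) = t ∧ ∀ q' : Fin N → ℕ, (∑ i, q' i) = t → pv hK c Cov q ≤ pv hK c Cov q'

/-- A greedy (myopic) acquisition sequence. -/
def Greedy (hK : 0 < K) (c : Fin N → Fin K → ℝ) (Cov : Matrix (Fin K) (Fin K) ℝ)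
    (m : ℕ → Fin N → ℕ) : Prop :=
  m 0 = 0 ∧ ∀ t, ∃ i, m (t + 1) = m t + Pi.single i 1 ∧
    ∀ j, pv hK c Cov (m t + Pi.single i 1) ≤ pv hK c Cov (m t + Pi.single j 1)

open Classical in
/-- The set `A̅` of all signals whose coefficient vector lies in the span of `{cⱼ : j ∈ A}`. -/
def subClosure (c : Fin N → Fin K → ℝ) (A : Finset (Fin N)) : Finset (Fin N) :=
  Finset.univ.filter fun i => c i ∈ Submodule.span ℝ (c '' ↑A)

/-- `S` is subspace-optimal: it uniquely minimizes `φ` among minimally spanning subsets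
of its own subspace closure. -/
def SubspaceOptimal (hK : 0 < K) (c : Fin N → Fin K → ℝ) (S : Finset (Fin N)) : Prop :=
  MinSpanning hK c S ∧
    ∀ T ⊆ subClosure c S, MinSpanning hK c T → T ≠ S → phi hK c S < phi hK c T

/-- The asymptotic posterior variance `V*`, valued in `[0,∞]`. -/
def Vstar (hK : 0 < K) (c : Fin N → Fin K → ℝ) (l : Fin N → ℝ) : ENNReal :=
  ⨆ (ε : ℝ) (_ : 0 < ε),
    ENNReal.ofReal ((infoMat c l + ε • (1 : Matrix (Fin K) (Fin K) ℝ))⁻¹ ⟨0, hK⟩ ⟨0, hK⟩)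


/-! ### Auxiliary lemmas -/

section AuxLinAlg

variable {n : Type*} [Fintype n]

lemma aux_vecMulVec_mulVec (u v y : n → ℝ) :
    Matrix.vecMulVec u v *ᵥ y = (v ⬝ᵥ y) • u := by
  funext j
  simp only [Matrix.mulVec, dotProduct, Matrix.vecMulVec_apply, Pi.smul_apply, smul_eq_mul,
    Finset.sum_mul]
  exact Finset.sum_congr rfl fun k _ => by ring

lemma aux_sum_mulVec {ι : Type*} (s : Finset ι) (A : ι → Matrix n n ℝ) (y : n → ℝ) :
    (∑ i ∈ s, A i) *ᵥ y = ∑ i ∈ s, A i *ᵥ y := by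
  funext j
  simp only [Matrix.mulVec, dotProduct, Matrix.sum_apply, Finset.sum_apply, Finset.sum_mul]
  exact Finset.sum_comm

lemma aux_dotProduct_sum {ι : Type*} (s : Finset ι) (x : n → ℝ) (f : ι → n → ℝ) :
    x ⬝ᵥ (∑ i ∈ s, f i) = ∑ i ∈ s, x ⬝ᵥ f i := by
  simp only [dotProduct, Finset.sum_apply, Finset.mul_sum]
  exact Finset.sum_comm

lemma aux_sum_dotProduct {ι : Type*} (s : Finset ι) (x : n → ℝ) (f : ι → n → ℝ) :
    (∑ i ∈ s, f i) ⬝ᵥ x = ∑ i ∈ s, f i ⬝ᵥ x := by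
  simp only [dotProduct, Finset.sum_apply, Finset.sum_mul]
  exact Finset.sum_comm

lemma aux_dot_mulVec_comm {A : Matrix n n ℝ} (hA : A.IsHermitian) (x y : n → ℝ) :
    x ⬝ᵥ A *ᵥ y = y ⬝ᵥ A *ᵥ x := by
  have hAt : Aᵀ = A := by
    rw [← Matrix.conjTranspose_eq_transpose_of_trivial]; exact hA
  rw [Matrix.dotProduct_mulVec, ← hAt, Matrix.vecMul_transpose, hAt, dotProduct_comm]

end AuxLinAlg

section AuxMain

variable {K N : ℕ}

lemma infoMat_mulVec (c : Fin N → Fin K → ℝ) (q : Fin N → ℝ) (y : Fin K → ℝ) :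
    infoMat c q *ᵥ y = ∑ i, (q i * (c i ⬝ᵥ y)) • c i := by
  rw [infoMat, aux_sum_mulVec]
  refine Finset.sum_congr rfl fun i _ => ?_
  rw [Matrix.smul_mulVec, aux_vecMulVec_mulVec, smul_smul]

lemma dot_infoMat (c : Fin N → Fin K → ℝ) (q : Fin N → ℝ) (x y : Fin K → ℝ) :
    x ⬝ᵥ infoMat c q *ᵥ y = ∑ i, q i * (c i ⬝ᵥ x) * (c i ⬝ᵥ y) := by
  rw [infoMat_mulVec, aux_dotProduct_sum]
  refine Finset.sum_congr rfl fun i _ => ?_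
  rw [dotProduct_smul, smul_eq_mul, dotProduct_comm x (c i)]
  ring

lemma infoMat_isHermitian (c : Fin N → Fin K → ℝ) (q : Fin N → ℝ) :
    (infoMat c q).IsHermitian := by
  rw [Matrix.IsHermitian, Matrix.conjTranspose_eq_transpose_of_trivial]
  ext j k
  simp only [infoMat, Matrix.transpose_apply, Matrix.sum_apply, Matrix.smul_apply,
    Matrix.vecMulVec_apply, smul_eq_mul]
  exact Finset.sum_congr rfl fun i _ => by ring

lemma M_posDef (c : Fin N → Fin K → ℝ) {Cov : Matrix (Fin K) (Fin K) ℝ} (hCov : Cov.PosDef)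
    (q : Fin N → ℝ) (hq : ∀ i, 0 ≤ q i) : (Cov⁻¹ + infoMat c q).PosDef := by
  refine hCov.inv.add_posSemidef (PosSemidef.of_dotProduct_mulVec_nonneg (infoMat_isHermitian c q) fun x => ?_)
  rw [star_trivial, dot_infoMat]
  refine Finset.sum_nonneg fun i _ => ?_
  rw [mul_assoc]
  exact mul_nonneg (hq i) (mul_self_nonneg _)

lemma pv_eq (hK : 0 < K) (c : Fin N → Fin K → ℝ) (Cov : Matrix (Fin K) (Fin K) ℝ)
    (q : Fin N → ℕ) :
    pv hK c Cov q
      = e1 hK ⬝ᵥ (Cov⁻¹ + infoMat c fun i => (q i : ℝ))⁻¹ *ᵥ e1 hK := by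
  rw [pv, postVar, e1, Matrix.mulVec_single, single_dotProduct]
  simp

lemma e1_ne_zero (hK : 0 < K) : e1 hK ≠ 0 := by
  intro h
  have := congrFun h ⟨0, hK⟩
  simp [e1] at this

lemma pv_pos (hK : 0 < K) (c : Fin N → Fin K → ℝ) {Cov : Matrix (Fin K) (Fin K) ℝ}
    (hCov : Cov.PosDef) (q : Fin N → ℕ) : 0 < pv hK c Cov q := by
  rw [pv_eq]
  have hMpd : (Cov⁻¹ + infoMat c fun i => (q i : ℝ)).PosDef :=
    M_posDef c hCov _ fun i => Nat.cast_nonneg _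
  have := hMpd.inv.dotProduct_mulVec_pos (e1_ne_zero hK)
  rwa [star_trivial] at this

lemma spanning_of_rep (hK : 0 < K) (c : Fin N → Fin K → ℝ) {T : Finset (Fin N)}
    {γ : Fin N → ℝ} (hsupp : ∀ i ∉ T, γ i = 0) (hsum : ∑ i, γ i • c i = e1 hK) :
    Spanning hK c T := by
  rw [Spanning, ← hsum]
  refine Submodule.sum_mem _ fun i _ => ?_
  by_cases hi : i ∈ T
  · exact Submodule.smul_mem _ _
      (Submodule.subset_span ⟨i, Finset.mem_coe.mpr hi, rfl⟩)
  · rw [hsupp i hi, zero_smul]; exact Submodule.zero_mem _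

lemma sum_extend (c : Fin N → Fin K → ℝ) (S : Finset (Fin N)) (f : ↥S → ℝ) :
    ∑ i, (if hi : i ∈ S then f ⟨i, hi⟩ else 0) • c i = ∑ i : ↥S, f i • c ↑i := by
  classical
  rw [← Finset.sum_subset (Finset.subset_univ S)
    (fun i _ hi => by rw [dif_neg hi, zero_smul])]
  rw [Finset.univ_eq_attach, ← Finset.sum_attach S fun i => (if hi : i ∈ S then f ⟨i, hi⟩ else 0) • c i]
  refine Finset.sum_congr rfl fun i _ => ?_
  rw [dif_pos i.2, Subtype.coe_eta]

lemma exists_rep (hK : 0 < K) (c : Fin N → Fin K → ℝ) {S : Finset (Fin N)}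
    (h : Spanning hK c S) : ∃ β, IsRep hK c S β := by
  classical
  rw [Spanning, Set.image_eq_range, Submodule.mem_span_range_iff_exists_fun] at h
  obtain ⟨f, hf⟩ := h
  exact ⟨fun i => if hi : i ∈ S then f ⟨i, hi⟩ else 0, fun i hi => dif_neg hi,
    (sum_extend c S f).trans hf⟩

lemma betaVec_isRep (hK : 0 < K) (c : Fin N → Fin K → ℝ) {S : Finset (Fin N)}
    (h : Spanning hK c S) : IsRep hK c S (betaVec hK c S) := by
  have hex := exists_rep hK c h
  rw [betaVec, dif_pos hex]
  exact hex.choose_spec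

lemma betaVec_ne_zero (hK : 0 < K) (c : Fin N → Fin K → ℝ) {S : Finset (Fin N)}
    (hS : MinSpanning hK c S) : ∀ i ∈ S, betaVec hK c S i ≠ 0 := by
  intro i hi h0
  have hrep := betaVec_isRep hK c hS.1
  refine hS.2 (S.erase i) (Finset.erase_ssubset hi) ?_
  refine spanning_of_rep hK c (γ := betaVec hK c S) ?_ hrep.2
  intro j hj
  by_cases h : j ∈ S
  · have hji : j = i := by
      by_contra hne; exact hj (Finset.mem_erase.mpr ⟨hne, h⟩)
    rw [hji]; exact h0
  · exact hrep.1 j h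

lemma linIndep (hK : 0 < K) (c : Fin N → Fin K → ℝ) {S : Finset (Fin N)}
    (hS : MinSpanning hK c S) : LinearIndependent ℝ fun i : ↥S => c ↑i := by
  classical
  by_contra hdep
  rw [Fintype.not_linearIndependent_iff] at hdep
  obtain ⟨g, hg0, j, hgj⟩ := hdep
  have hrep := betaVec_isRep hK c hS.1
  set β := betaVec hK c S with hβ
  have hg'sum : ∑ i, (if hi : i ∈ S then g ⟨i, hi⟩ else 0) • c i = 0 :=
    (sum_extend c S g).trans hg0
  set g' : Fin N → ℝ := fun i => if hi : i ∈ S then g ⟨i, hi⟩ else 0 with hg'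
  have hg'j : g' ↑j = g j := by
    show (if hi : (↑j : Fin N) ∈ S then g ⟨↑j, hi⟩ else 0) = g j
    rw [dif_pos j.2, Subtype.coe_eta]
  set γ : Fin N → ℝ := fun i => β i - (β ↑j / g j) * g' i with hγ
  have hγj : γ ↑j = 0 := by
    show β ↑j - (β ↑j / g j) * g' ↑j = 0
    rw [hg'j]; field_simp; ring
  have hsum : ∑ i, γ i • c i = e1 hK := by
    have hterm : ∀ i, γ i • c i = β i • c i - (β ↑j / g j) • ((g' i) • c i) := by
      intro i
      show (β i - (β ↑j / g j) * g' i) • c i = _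
      rw [sub_smul, smul_smul]
    rw [Finset.sum_congr rfl fun i _ => hterm i, Finset.sum_sub_distrib, hrep.2,
      ← Finset.smul_sum, hg'sum, smul_zero, sub_zero]
  refine hS.2 (S.erase ↑j) (Finset.erase_ssubset j.2) (spanning_of_rep hK c ?_ hsum)
  intro i hi
  by_cases h : i ∈ S
  · have hij : i = ↑j := by
      by_contra hne; exact hi (Finset.mem_erase.mpr ⟨hne, h⟩)
    rw [hij]; exact hγj
  · have h1 : β i = 0 := hrep.1 i h
    have h2 : g' i = 0 := dif_neg h
    simp only [hγ, h1, h2, mul_zero, sub_zero]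

lemma exists_dual (hK : 0 < K) (c : Fin N → Fin K → ℝ) {S : Finset (Fin N)}
    (hS : MinSpanning hK c S) (a : Fin N → ℝ) :
    ∃ w : Fin K → ℝ, ∀ i ∈ S, c i ⬝ᵥ w = a i := by
  classical
  have hli := linIndep hK c hS
  set G : Matrix ↥S ↥S ℝ := Matrix.of fun i j => c ↑i ⬝ᵥ c ↑j with hG
  have hGherm : G.IsHermitian := by
    rw [Matrix.IsHermitian, Matrix.conjTranspose_eq_transpose_of_trivial]
    ext i j
    simp only [Matrix.transpose_apply, hG, Matrix.of_apply]
    exact dotProduct_comm _ _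
  have hkey : ∀ x : ↥S → ℝ, ∀ i : ↥S, (G *ᵥ x) i = c ↑i ⬝ᵥ ∑ k : ↥S, x k • c ↑k := by
    intro x i
    have h1 : (G *ᵥ x) i = ∑ k : ↥S, (c ↑i ⬝ᵥ c ↑k) * x k := by
      simp only [Matrix.mulVec, dotProduct, hG, Matrix.of_apply]
    rw [h1, aux_dotProduct_sum]
    refine Finset.sum_congr rfl fun k _ => ?_
    rw [dotProduct_smul, smul_eq_mul, mul_comm]
  have hGpd : G.PosDef := by
    refine Matrix.PosDef.of_dotProduct_mulVec_pos hGherm fun x hx => ?_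
    rw [star_trivial]
    set y : Fin K → ℝ := ∑ k : ↥S, x k • c ↑k with hy
    have h1 : x ⬝ᵥ G *ᵥ x = y ⬝ᵥ y := by
      rw [hy, aux_sum_dotProduct, dotProduct]
      refine Finset.sum_congr rfl fun i _ => ?_
      rw [hkey x i, smul_dotProduct, smul_eq_mul]
    have hyne : y ≠ 0 := by
      intro h0
      exact hx (funext fun i => Fintype.linearIndependent_iff.mp hli x (hy.symm.trans h0) i)
    have h2 : y ⬝ᵥ y ≠ 0 := fun h => hyne (dotProduct_self_eq_zero.mp h)
    have h3 : 0 ≤ y ⬝ᵥ y := Finset.sum_nonneg fun k _ => mul_self_nonneg _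
    rw [h1]
    exact lt_of_le_of_ne h3 (Ne.symm h2)
  have hGdet : IsUnit G.det := (Matrix.isUnit_iff_isUnit_det _).mp hGpd.isUnit
  set z : ↥S → ℝ := G⁻¹ *ᵥ fun i : ↥S => a ↑i with hz
  refine ⟨∑ k : ↥S, z k • c ↑k, fun i hi => ?_⟩
  have h4 := (hkey z ⟨i, hi⟩).symm
  rw [hz, Matrix.mulVec_mulVec, Matrix.mul_nonsing_inv _ hGdet, Matrix.one_mulVec] at h4
  exact h4

lemma phi_pos (hK : 0 < K) (c : Fin N → Fin K → ℝ) {S : Finset (Fin N)}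
    (hS : MinSpanning hK c S) : 0 < phi hK c S := by
  have hrep := betaVec_isRep hK c hS.1
  have hex : ∃ i, betaVec hK c S i ≠ 0 := by
    by_contra h
    push_neg at h
    have : e1 hK = 0 := by rw [← hrep.2]; simp [h]
    exact e1_ne_zero hK this
  obtain ⟨i, hi⟩ := hex
  calc (0:ℝ) < |betaVec hK c S i| := abs_pos.mpr hi
    _ ≤ ∑ i, |betaVec hK c S i| :=
        Finset.single_le_sum (f := fun j => |betaVec hK c S j|)
          (fun j _ => abs_nonneg _) (Finset.mem_univ i)
    _ = phi hK c S := rfl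

lemma lower_bound (hK : 0 < K) (c : Fin N → Fin K → ℝ) {S : Finset (Fin N)}
    (hS : MinSpanning hK c S) (Cov : Matrix (Fin K) (Fin K) ℝ) (hCov : Cov.PosDef) :
    ∃ a : ℝ, 0 ≤ a ∧ ∀ q : Fin N → ℕ, (∀ i ∉ S, q i = 0) →
      1 / (a + ((∑ i, q i : ℕ) : ℝ) / (phi hK c S) ^ 2) ≤ pv hK c Cov q := by
  classical
  have hrep := betaVec_isRep hK c hS.1
  set β := betaVec hK c S with hβ
  set φ := phi hK c S with hφdef
  have hφ : 0 < φ := phi_pos hK c hS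
  obtain ⟨v, hv⟩ := exists_dual hK c hS fun i => (if β i < 0 then (-1:ℝ) else 1) / φ
  have hβv : ∀ i, β i * (c i ⬝ᵥ v) = |β i| / φ := by
    intro i
    by_cases hi : i ∈ S
    · rw [hv i hi]
      rcases lt_or_ge (β i) 0 with h | h
      · rw [if_pos h, abs_of_neg h]; field_simp
      · rw [if_neg (not_lt.mpr h), abs_of_nonneg h]; field_simp
    · rw [hrep.1 i hi]; simp
  have hsq : ∀ i ∈ S, (c i ⬝ᵥ v) * (c i ⬝ᵥ v) = 1 / φ ^ 2 := by
    intro i hi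
    rw [hv i hi]
    split_ifs <;> field_simp <;> ring_nf
  have hev : e1 hK ⬝ᵥ v = 1 := by
    rw [← hrep.2, aux_sum_dotProduct]
    have h1 : ∀ i, (β i • c i) ⬝ᵥ v = |β i| / φ := fun i => by
      rw [smul_dotProduct, smul_eq_mul, hβv i]
    rw [Finset.sum_congr rfl fun i _ => h1 i, ← Finset.sum_div]
    rw [show ∑ i, |β i| = φ from rfl]
    field_simp
  refine ⟨v ⬝ᵥ Cov⁻¹ *ᵥ v, ?_, ?_⟩
  · have := hCov.inv.posSemidef.dotProduct_mulVec_nonneg v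
    rwa [star_trivial] at this
  intro q hsupp
  set q' : Fin N → ℝ := fun i => (q i : ℝ) with hq'
  set M := Cov⁻¹ + infoMat c q' with hM
  have hMpd : M.PosDef := M_posDef c hCov q' fun i => Nat.cast_nonneg _
  have hMdet : IsUnit M.det := (Matrix.isUnit_iff_isUnit_det _).mp hMpd.isUnit
  set u := M⁻¹ *ᵥ e1 hK with hu
  have hMu : M *ᵥ u = e1 hK := by
    rw [hu, Matrix.mulVec_mulVec, Matrix.mul_nonsing_inv _ hMdet, Matrix.one_mulVec]
  set d := e1 hK ⬝ᵥ M⁻¹ *ᵥ e1 hK with hd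
  have hpv : pv hK c Cov q = d := pv_eq hK c Cov q
  have hd0 : 0 < d := by
    have := hMpd.inv.dotProduct_mulVec_pos (e1_ne_zero hK)
    rwa [star_trivial] at this
  have hvMv : v ⬝ᵥ M *ᵥ v = v ⬝ᵥ Cov⁻¹ *ᵥ v + ((∑ i, q i : ℕ) : ℝ) / φ ^ 2 := by
    rw [hM, Matrix.add_mulVec, dotProduct_add, dot_infoMat]
    congr 1
    have h1 : ∀ i, q' i * (c i ⬝ᵥ v) * (c i ⬝ᵥ v) = (q i : ℝ) / φ ^ 2 := by
      intro i
      by_cases hi : i ∈ S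
      · rw [mul_assoc, hsq i hi, hq']
        field_simp
      · have : q i = 0 := hsupp i hi
        simp [hq', this]
    rw [Finset.sum_congr rfl fun i _ => h1 i, ← Finset.sum_div, Nat.cast_sum]
  have hkey : 1 / d ≤ v ⬝ᵥ M *ᵥ v := by
    set z := v - (1 / d) • u with hz
    have h0 : 0 ≤ z ⬝ᵥ M *ᵥ z := by
      have := hMpd.posSemidef.dotProduct_mulVec_nonneg z
      rwa [star_trivial] at this
    have hue1 : u ⬝ᵥ e1 hK = d := by rw [dotProduct_comm]
    have hvMu : v ⬝ᵥ M *ᵥ u = 1 := by rw [hMu, dotProduct_comm, hev]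
    have huMv : u ⬝ᵥ M *ᵥ v = 1 := by
      rw [aux_dot_mulVec_comm hMpd.1]; exact hvMu
    have huMu : u ⬝ᵥ M *ᵥ u = d := by rw [hMu]; exact hue1
    have hexp : z ⬝ᵥ M *ᵥ z = v ⬝ᵥ M *ᵥ v - 1 / d := by
      rw [hz, Matrix.mulVec_sub, Matrix.mulVec_smul, dotProduct_sub, sub_dotProduct,
        sub_dotProduct, dotProduct_smul, dotProduct_smul, smul_dotProduct, smul_dotProduct,
        hvMu, huMv, huMu]
      simp only [smul_eq_mul]
      field_simp
      ring
    linarith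
  have hvMv_pos : 0 < v ⬝ᵥ M *ᵥ v := lt_of_lt_of_le (by positivity) hkey
  rw [hpv, ← hvMv]
  have h2 : 1 ≤ (v ⬝ᵥ M *ᵥ v) * d := (div_le_iff₀ hd0).mp hkey
  rw [div_le_iff₀ hvMv_pos]
  linarith [mul_comm d (v ⬝ᵥ M *ᵥ v)]

lemma upper_bound (hK : 0 < K) (c : Fin N → Fin K → ℝ) {S : Finset (Fin N)}
    (hS : MinSpanning hK c S) (Cov : Matrix (Fin K) (Fin K) ℝ) (hCov : Cov.PosDef)
    (q : Fin N → ℕ) (hsupp : ∀ i ∉ S, q i = 0) (hpos : ∀ i ∈ S, 0 < q i) :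
    pv hK c Cov q ≤ ∑ i ∈ S, (betaVec hK c S i) ^ 2 / (q i : ℝ) := by
  classical
  have hrep := betaVec_isRep hK c hS.1
  set β := betaVec hK c S with hβ
  obtain ⟨w, hw⟩ := exists_dual hK c hS fun i => β i / (q i : ℝ)
  set q' : Fin N → ℝ := fun i => (q i : ℝ) with hq'
  set M := Cov⁻¹ + infoMat c q' with hM
  have hMpd : M.PosDef := M_posDef c hCov q' fun i => Nat.cast_nonneg _
  have hMdet : IsUnit M.det := (Matrix.isUnit_iff_isUnit_det _).mp hMpd.isUnit
  set u := M⁻¹ *ᵥ e1 hK with hu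
  have hMu : M *ᵥ u = e1 hK := by
    rw [hu, Matrix.mulVec_mulVec, Matrix.mul_nonsing_inv _ hMdet, Matrix.one_mulVec]
  set d := e1 hK ⬝ᵥ M⁻¹ *ᵥ e1 hK with hd
  have hpv : pv hK c Cov q = d := pv_eq hK c Cov q
  set J := infoMat c q' with hJ
  have hJw : J *ᵥ w = e1 hK := by
    rw [hJ, infoMat_mulVec, ← hrep.2]
    refine Finset.sum_congr rfl fun i _ => ?_
    by_cases hi : i ∈ S
    · rw [hw i hi]
      congr 1
      have hq0 : (q i : ℝ) ≠ 0 := Nat.cast_ne_zero.mpr (hpos i hi).ne'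
      show (q i : ℝ) * (β i / (q i : ℝ)) = β i
      field_simp
    · have h1 : q i = 0 := hsupp i hi
      have h2 : β i = 0 := hrep.1 i hi
      show ((q i : ℝ) * (c i ⬝ᵥ w)) • c i = β i • c i
      rw [h1, h2]
      simp
  have he1w : e1 hK ⬝ᵥ w = ∑ i ∈ S, β i ^ 2 / (q i : ℝ) := by
    rw [← hrep.2, aux_sum_dotProduct]
    rw [← Finset.sum_subset (Finset.subset_univ S) (fun i _ hi => by
      rw [hrep.1 i hi]; simp)]
    refine Finset.sum_congr rfl fun i hi => ?_
    rw [smul_dotProduct, smul_eq_mul, hw i hi]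
    ring
  have hue1 : u ⬝ᵥ e1 hK = d := by rw [dotProduct_comm]
  have huMu : u ⬝ᵥ M *ᵥ u = d := by rw [hMu]; exact hue1
  have huJu : u ⬝ᵥ J *ᵥ u ≤ d := by
    have hsplit : u ⬝ᵥ M *ᵥ u = u ⬝ᵥ Cov⁻¹ *ᵥ u + u ⬝ᵥ J *ᵥ u := by
      rw [hM, Matrix.add_mulVec, dotProduct_add]
    have h1 : 0 ≤ u ⬝ᵥ Cov⁻¹ *ᵥ u := by
      have := hCov.inv.posSemidef.dotProduct_mulVec_nonneg u
      rwa [star_trivial] at this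
    linarith
  have hquad : 0 ≤ (u - w) ⬝ᵥ J *ᵥ (u - w) := by
    rw [hJ, dot_infoMat]
    refine Finset.sum_nonneg fun i _ => ?_
    rw [mul_assoc]
    exact mul_nonneg (Nat.cast_nonneg _) (mul_self_nonneg _)
  have huJw : u ⬝ᵥ J *ᵥ w = d := by rw [hJw]; exact hue1
  have hwJu : w ⬝ᵥ J *ᵥ u = d := by
    rw [aux_dot_mulVec_comm (infoMat_isHermitian c q')]; exact huJw
  have hwJw : w ⬝ᵥ J *ᵥ w = e1 hK ⬝ᵥ w := by
    rw [hJw, dotProduct_comm]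
  have hexp : (u - w) ⬝ᵥ J *ᵥ (u - w)
      = u ⬝ᵥ J *ᵥ u - d - d + e1 hK ⬝ᵥ w := by
    rw [Matrix.mulVec_sub, dotProduct_sub, sub_dotProduct, sub_dotProduct,
      huJw, hwJu, hwJw]
    ring
  rw [hpv, ← he1w]
  linarith

end AuxMain

/-- Under optimal sampling restricted to a minimal spanning set `S`,
the minimum achievable posterior variance `W(t)` satisfies `t·W(t) → φ(S)²`. -/
theorem constrained_optimal_speed {K N : ℕ} (hK : 0 < K) (hN : 0 < N)
    (c : Fin N → Fin K → ℝ) (S : Finset (Fin N)) (hS : MinSpanning hK c S)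
    (Cov : Matrix (Fin K) (Fin K) ℝ) (hCov : Cov.PosDef) :
    Filter.Tendsto
      (fun t : ℕ => (t : ℝ) *
        sInf {x : ℝ | ∃ q : Fin N → ℕ,
          (∀ i ∉ S, q i = 0) ∧ (∑ i, q i) = t ∧ pv hK c Cov q = x})
      Filter.atTop (𝓝 ((phi hK c S) ^ 2)) := by
  classical
  have hrep := betaVec_isRep hK c hS.1
  set β := betaVec hK c S with hβ
  set φ := phi hK c S with hφdef
  have hφ : 0 < φ := phi_pos hK c hS
  have hβne : ∀ i ∈ S, β i ≠ 0 := betaVec_ne_zero hK c hS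
  set lam : Fin N → ℝ := fun i => |β i| / φ with hlam
  have hlamnn : ∀ i, 0 ≤ lam i := fun i => div_nonneg (abs_nonneg _) hφ.le
  have hlampos : ∀ i ∈ S, 0 < lam i := fun i hi => div_pos (abs_pos.mpr (hβne i hi)) hφ
  have hphisum : ∑ i, |β i| = φ := rfl
  have hlamle : ∀ T : Finset (Fin N), T ⊆ S → ∑ i ∈ T, lam i ≤ 1 := by
    intro T _
    have h1 : ∑ i ∈ T, lam i ≤ ∑ i, lam i :=
      Finset.sum_le_sum_of_subset_of_nonneg (Finset.subset_univ T) fun i _ _ => hlamnn i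
    have h2 : ∑ i, lam i = 1 := by
      rw [show ∑ i, lam i = ∑ i, |β i| / φ from rfl, ← Finset.sum_div, hphisum,
        div_self hφ.ne']
    linarith
  have hSne : S.Nonempty := by
    rcases Finset.eq_empty_or_nonempty S with h | h
    · exfalso
      have hz : ∀ i, β i = 0 := fun i => hrep.1 i (by simp [h])
      have : φ = 0 := by rw [← hphisum]; simp [hz]
      linarith
    · exact h
  obtain ⟨i₀, hi₀⟩ := hSne
  obtain ⟨a, ha0, hLB⟩ := lower_bound hK c hS Cov hCov
  have hbdd : ∀ t : ℕ, BddBelow {x : ℝ | ∃ q : Fin N → ℕ,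
      (∀ i ∉ S, q i = 0) ∧ (∑ i, q i) = t ∧ pv hK c Cov q = x} := by
    intro t
    refine ⟨0, ?_⟩
    rintro x ⟨q, -, -, rfl⟩
    exact (pv_pos hK c hCov q).le
  have hne : ∀ t : ℕ, Set.Nonempty {x : ℝ | ∃ q : Fin N → ℕ,
      (∀ i ∉ S, q i = 0) ∧ (∑ i, q i) = t ∧ pv hK c Cov q = x} := by
    intro t
    refine ⟨pv hK c Cov fun i => if i = i₀ then t else 0,
      (fun i => if i = i₀ then t else 0), ?_, ?_, rfl⟩
    · intro i hi
      have : i ≠ i₀ := fun h => hi (h ▸ hi₀)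
      simp [this]
    · simp [Finset.sum_ite_eq']
  refine tendsto_of_tendsto_of_tendsto_of_le_of_le'
    (g := fun t : ℕ => (t : ℝ) * (1 / (a + (t : ℝ) / φ ^ 2)))
    (h := fun t : ℕ => ∑ i ∈ S, β i ^ 2 / (lam i - 1 / (t : ℝ)))
    ?_ ?_ ?_ ?_
  · -- lower sequence tends to φ²
    have hden : Tendsto (fun t : ℕ => a / (t : ℝ) + 1 / φ ^ 2) atTop (𝓝 (0 + 1 / φ ^ 2)) :=
      (tendsto_const_div_atTop_nhds_zero_nat a).add tendsto_const_nhds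
    rw [zero_add] at hden
    have hne' : (1 : ℝ) / φ ^ 2 ≠ 0 := by positivity
    have h1 : Tendsto (fun t : ℕ => 1 / (a / (t : ℝ) + 1 / φ ^ 2)) atTop
        (𝓝 (1 / (1 / φ ^ 2))) := tendsto_const_nhds.div hden hne'
    rw [one_div_one_div] at h1
    refine h1.congr' ?_
    filter_upwards [eventually_ge_atTop 1] with t ht
    have ht0 : (0 : ℝ) < (t : ℝ) := by exact_mod_cast ht
    have hd2 : (0:ℝ) < a + (t : ℝ) / φ ^ 2 := by positivity
    have hd1 : (0:ℝ) < a / (t : ℝ) + 1 / φ ^ 2 := by positivity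
    field_simp <;> ring
  · -- upper sequence tends to φ²
    have hsum : ∑ i ∈ S, β i ^ 2 / lam i = φ ^ 2 := by
      have h1 : ∀ i ∈ S, β i ^ 2 / lam i = |β i| * φ := by
        intro i hi
        have habs : |β i| ≠ 0 := abs_ne_zero.mpr (hβne i hi)
        have hsq' : β i ^ 2 = |β i| * |β i| := by rw [← sq_abs, sq]
        rw [show lam i = |β i| / φ from rfl, hsq']
        field_simp
      rw [Finset.sum_congr rfl h1, ← Finset.sum_mul]
      have h2 : ∑ i ∈ S, |β i| = φ := by
        rw [← hphisum]
        exact Finset.sum_subset (Finset.subset_univ S) fun i _ hi => by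
          rw [hrep.1 i hi, abs_zero]
      rw [h2, sq]
    have h3 : Tendsto (fun t : ℕ => ∑ i ∈ S, β i ^ 2 / (lam i - 1 / (t : ℝ))) atTop
        (𝓝 (∑ i ∈ S, β i ^ 2 / lam i)) := by
      refine tendsto_finset_sum _ fun i hi => ?_
      have hd : Tendsto (fun t : ℕ => lam i - 1 / (t : ℝ)) atTop (𝓝 (lam i - 0)) :=
        tendsto_const_nhds.sub tendsto_one_div_atTop_nhds_zero_nat
      rw [sub_zero] at hd
      exact tendsto_const_nhds.div hd (hlampos i hi).ne'
    rwa [hsum] at h3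
  · -- eventual lower bound
    refine Eventually.of_forall fun t => ?_
    have hWlb : 1 / (a + (t : ℝ) / φ ^ 2) ≤ sInf {x : ℝ | ∃ q : Fin N → ℕ,
        (∀ i ∉ S, q i = 0) ∧ (∑ i, q i) = t ∧ pv hK c Cov q = x} := by
      refine le_csInf (hne t) ?_
      rintro x ⟨q, hq1, hq2, rfl⟩
      have h := hLB q hq1
      rwa [hq2] at h
    exact mul_le_mul_of_nonneg_left hWlb (Nat.cast_nonneg t)
  · -- eventual upper bound
    have hev2 : ∀ᶠ t : ℕ in atTop, ∀ i ∈ S, (2 : ℝ) ≤ (t : ℝ) * lam i := by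
      rw [eventually_all_finset]
      intro i hi
      have := (tendsto_natCast_atTop_atTop (R := ℝ)).atTop_mul_const (hlampos i hi)
      exact this.eventually_ge_atTop 2
    filter_upwards [hev2, eventually_ge_atTop 1] with t htl ht1
    have ht0 : (0 : ℝ) < (t : ℝ) := by exact_mod_cast ht1
    set R : ℕ := ∑ i ∈ S.erase i₀, ⌊(t : ℝ) * lam i⌋₊ with hR
    set qt : Fin N → ℕ := fun i =>
      if i = i₀ then t - R else if i ∈ S then ⌊(t : ℝ) * lam i⌋₊ else 0 with hqt
    have hfloor_le : ∀ T : Finset (Fin N), T ⊆ S →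
        ((∑ i ∈ T, ⌊(t : ℝ) * lam i⌋₊ : ℕ) : ℝ) ≤ (t : ℝ) := by
      intro T hT
      push_cast
      calc ∑ i ∈ T, ((⌊(t : ℝ) * lam i⌋₊ : ℕ) : ℝ)
          ≤ ∑ i ∈ T, (t : ℝ) * lam i :=
            Finset.sum_le_sum fun i _ => Nat.floor_le (by positivity)
        _ = (t : ℝ) * ∑ i ∈ T, lam i := by rw [Finset.mul_sum]
        _ ≤ (t : ℝ) * 1 := mul_le_mul_of_nonneg_left (hlamle T hT) ht0.le
        _ = (t : ℝ) := mul_one _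
    have hRle : R ≤ t := by
      have h := hfloor_le (S.erase i₀) (Finset.erase_subset _ _)
      exact_mod_cast h
    have hsupp : ∀ i ∉ S, qt i = 0 := by
      intro i hi
      have hne'' : i ≠ i₀ := fun h => hi (h ▸ hi₀)
      simp [hqt, hne'', hi]
    have hsumq : ∑ i, qt i = t := by
      rw [← Finset.sum_subset (Finset.subset_univ S) fun i _ hi => hsupp i hi]
      rw [← Finset.add_sum_erase S qt hi₀]
      have h1 : qt i₀ = t - R := by simp [hqt]
      have h2 : ∑ i ∈ S.erase i₀, qt i = R := by
        rw [hR]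
        refine Finset.sum_congr rfl fun i hi => ?_
        have h3 := Finset.mem_erase.mp hi
        simp [hqt, h3.1, h3.2]
      rw [h1, h2]
      exact Nat.sub_add_cancel hRle
    have hge : ∀ i ∈ S, ⌊(t : ℝ) * lam i⌋₊ ≤ qt i := by
      intro i hi
      by_cases h : i = i₀
      · have hqti : qt i = t - R := by simp [hqt, h]
        rw [hqti, hR]
        have h5 : ⌊(t : ℝ) * lam i⌋₊ + ∑ j ∈ S.erase i₀, ⌊(t : ℝ) * lam j⌋₊ ≤ t := by
          have h4 : ⌊(t : ℝ) * lam i⌋₊ + ∑ j ∈ S.erase i₀, ⌊(t : ℝ) * lam j⌋₊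
              = ∑ j ∈ S, ⌊(t : ℝ) * lam j⌋₊ := by
            rw [h, Finset.add_sum_erase S (fun j => ⌊(t : ℝ) * lam j⌋₊) hi₀]
          rw [h4]
          exact_mod_cast hfloor_le S (subset_refl S)
        omega
      · simp [hqt, h, hi]
    have hposq : ∀ i ∈ S, 0 < qt i := by
      intro i hi
      refine lt_of_lt_of_le ?_ (hge i hi)
      refine Nat.floor_pos.mpr ?_
      have := htl i hi
      linarith
    have hgeR : ∀ i ∈ S, (t : ℝ) * lam i - 1 ≤ (qt i : ℝ) := by
      intro i hi
      have h1 : ((⌊(t : ℝ) * lam i⌋₊ : ℕ) : ℝ) ≤ (qt i : ℝ) := Nat.cast_le.mpr (hge i hi)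
      have h2 := Nat.sub_one_lt_floor ((t : ℝ) * lam i)
      linarith
    have hWub : sInf {x : ℝ | ∃ q : Fin N → ℕ,
        (∀ i ∉ S, q i = 0) ∧ (∑ i, q i) = t ∧ pv hK c Cov q = x} ≤ pv hK c Cov qt :=
      csInf_le (hbdd t) ⟨qt, hsupp, hsumq, rfl⟩
    have hub := upper_bound hK c hS Cov hCov qt hsupp hposq
    have hterm : ∀ i ∈ S, (t : ℝ) * (β i ^ 2 / (qt i : ℝ)) ≤ β i ^ 2 / (lam i - 1 / (t : ℝ)) := by
      intro i hi
      have hq0 : (0 : ℝ) < (qt i : ℝ) := by exact_mod_cast hposq i hi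
      have hl0 : 0 < lam i - 1 / (t : ℝ) := by
        rw [sub_pos, div_lt_iff₀ ht0]
        linarith [htl i hi, mul_comm (t : ℝ) (lam i)]
      rw [← mul_div_assoc, div_le_div_iff₀ hq0 hl0]
      have ht' : (t : ℝ) * (1 / (t : ℝ)) = 1 := by field_simp
      have h3 : (t : ℝ) * (lam i - 1 / (t : ℝ)) ≤ (qt i : ℝ) := by
        rw [mul_sub, ht']
        linarith [hgeR i hi]
      calc (t : ℝ) * β i ^ 2 * (lam i - 1 / (t : ℝ))
          = β i ^ 2 * ((t : ℝ) * (lam i - 1 / (t : ℝ))) := by ring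
        _ ≤ β i ^ 2 * (qt i : ℝ) := mul_le_mul_of_nonneg_left h3 (sq_nonneg _)
    refine le_trans (mul_le_mul_of_nonneg_left hWub ht0.le) ?_
    refine le_trans (mul_le_mul_of_nonneg_left hub ht0.le) ?_
    rw [Finset.mul_sum]
    exact Finset.sum_le_sum hterm

end LearningTraps
end
end

section
/- Fix a positive definite prior Σ⁰ and λ ∈ [0,∞)^N. Then t·V_{Σ⁰}(t·λ) converges, as the real parameter t → ∞, to V*(λ) in [0,∞]. In particular, if the matrix Σᵢ λᵢ·cᵢcᵢᵀ is positive definite, then lim_{t→∞} t·V_{Σ⁰}(t·λ) = [(Σᵢ λᵢ·cᵢcᵢᵀ)⁻¹]₁₁, independently of the prior Σ⁰. -/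
open Matrix Finset Filter Topology

noncomputable section

namespace LearningTraps

variable {K N : ℕ}

lemma smul_posDef {A : Matrix (Fin K) (Fin K) ℝ} (hA : A.PosDef) {ε : ℝ} (hε : 0 < ε) :
    (ε • A).PosDef := by
  refine Matrix.PosDef.of_dotProduct_mulVec_pos ?_ fun x hx => ?_
  · have := hA.1
    unfold Matrix.IsHermitian at *
    rw [conjTranspose_smul, this]
    simp
  · rw [smul_mulVec, dotProduct_smul, smul_eq_mul]
    exact mul_pos hε (hA.dotProduct_mulVec_pos hx)

lemma smul_posSemidef {A : Matrix (Fin K) (Fin K) ℝ} (hA : A.PosSemidef) {ε : ℝ} (hε : 0 ≤ ε) :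
    (ε • A).PosSemidef := by
  refine Matrix.PosSemidef.of_dotProduct_mulVec_nonneg ?_ fun x => ?_
  · have := hA.1
    unfold Matrix.IsHermitian at *
    rw [conjTranspose_smul, this]
    simp
  · rw [smul_mulVec, dotProduct_smul, smul_eq_mul]
    exact mul_nonneg hε (hA.dotProduct_mulVec_nonneg x)

lemma vecMulVec_mulVec' (v x : Fin K → ℝ) :
    Matrix.vecMulVec v v *ᵥ x = (v ⬝ᵥ x) • v := by
  ext i
  simp only [Matrix.mulVec, Matrix.vecMulVec_apply, dotProduct, Pi.smul_apply, smul_eq_mul]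
  rw [Finset.sum_mul]
  exact Finset.sum_congr rfl fun j _ => by ring

lemma infoMat_posSemidef (c : Fin N → Fin K → ℝ) {l : Fin N → ℝ} (hl : ∀ i, 0 ≤ l i) :
    (infoMat c l).PosSemidef := by
  unfold infoMat
  apply Finset.sum_induction (fun i => l i • Matrix.vecMulVec (c i) (c i))
    (fun M : Matrix (Fin K) (Fin K) ℝ => M.PosSemidef)
    (fun a b ha hb => ha.add hb) Matrix.PosSemidef.zero
  intro i _
  have hherm : (Matrix.vecMulVec (c i) (c i)).IsHermitian := by
    ext a b
    simp [Matrix.conjTranspose_apply, Matrix.vecMulVec_apply, mul_comm]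
  refine smul_posSemidef (.of_dotProduct_mulVec_nonneg hherm fun x => ?_) (hl i)
  rw [vecMulVec_mulVec', dotProduct_smul, star_trivial, smul_eq_mul, dotProduct_comm]
  exact mul_self_nonneg _

lemma infoMat_smul (c : Fin N → Fin K → ℝ) (l : Fin N → ℝ) (t : ℝ) :
    infoMat c (t • l) = t • infoMat c l := by
  unfold infoMat
  rw [Finset.smul_sum]
  exact Finset.sum_congr rfl fun i _ => by rw [Pi.smul_apply, smul_eq_mul, mul_smul]

/-- Loewner antitonicity of the inverse. -/
lemma inv_sub_inv_posSemidef {P Q : Matrix (Fin K) (Fin K) ℝ}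
    (hP : P.PosDef) (hQ : Q.PosDef) (h : (Q - P).PosSemidef) :
    (P⁻¹ - Q⁻¹).PosSemidef := by
  refine .of_dotProduct_mulVec_nonneg (hP.inv.1.sub hQ.inv.1) fun x => ?_
  set y := Q⁻¹ *ᵥ x with hy
  set z := P⁻¹ *ᵥ x with hz
  have hPdet : IsUnit P.det := hP.det_pos.ne'.isUnit
  have hQdet : IsUnit Q.det := hQ.det_pos.ne'.isUnit
  have hQy : Q *ᵥ y = x := by
    rw [hy, Matrix.mulVec_mulVec, Matrix.mul_nonsing_inv _ hQdet, Matrix.one_mulVec]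
  have hPz : P *ᵥ z = x := by
    rw [hz, Matrix.mulVec_mulVec, Matrix.mul_nonsing_inv _ hPdet, Matrix.one_mulVec]
  have hPt : Pᵀ = P := by
    have := hP.1
    rwa [Matrix.IsHermitian, Matrix.conjTranspose_eq_transpose_of_trivial] at this
  have hsym : ∀ v w : Fin K → ℝ, v ⬝ᵥ (P *ᵥ w) = (P *ᵥ v) ⬝ᵥ w := by
    intro v w
    rw [Matrix.dotProduct_mulVec, ← Matrix.mulVec_transpose, hPt]
  have h1 : 0 ≤ (y - z) ⬝ᵥ (P *ᵥ (y - z)) := by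
    have := hP.posSemidef.dotProduct_mulVec_nonneg (y - z); rwa [star_trivial] at this
  have h2 : y ⬝ᵥ (P *ᵥ y) ≤ y ⬝ᵥ x := by
    have := h.dotProduct_mulVec_nonneg y
    rw [star_trivial, Matrix.sub_mulVec, dotProduct_sub, hQy] at this
    linarith
  have hexp : (y - z) ⬝ᵥ (P *ᵥ (y - z)) =
      y ⬝ᵥ (P *ᵥ y) - y ⬝ᵥ x - x ⬝ᵥ y + z ⬝ᵥ x := by
    rw [Matrix.mulVec_sub, dotProduct_sub, sub_dotProduct, sub_dotProduct]
    have e1 : y ⬝ᵥ (P *ᵥ z) = y ⬝ᵥ x := by rw [hPz]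
    have e2 : z ⬝ᵥ (P *ᵥ y) = x ⬝ᵥ y := by rw [hsym, hPz]
    have e3 : z ⬝ᵥ (P *ᵥ z) = z ⬝ᵥ x := by rw [hPz]
    rw [e1, e2, e3]; ring
  have hfin : 0 ≤ z ⬝ᵥ x - x ⬝ᵥ y := by
    rw [hexp] at h1; linarith
  rw [star_trivial, Matrix.sub_mulVec, dotProduct_sub, ← hy, ← hz]
  rw [dotProduct_comm x z]
  linarith

lemma one_posDef : (1 : Matrix (Fin K) (Fin K) ℝ).PosDef := by
  refine .of_dotProduct_mulVec_pos Matrix.isHermitian_one fun x hx => ?_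
  rw [Matrix.one_mulVec]
  have h0 : 0 ≤ dotProduct (star x) x := dotProduct_star_self_nonneg x
  have hne : dotProduct (star x) x ≠ 0 := by
    rw [star_trivial]
    exact fun h => hx (dotProduct_self_eq_zero.mp h)
  exact lt_of_le_of_ne h0 (Ne.symm hne)

lemma dot_single (M : Matrix (Fin K) (Fin K) ℝ) (i : Fin K) :
    Pi.single i 1 ⬝ᵥ (M *ᵥ Pi.single i 1) = M i i := by
  simp [Matrix.mulVec_single, dotProduct, Pi.single_apply]

lemma inv_entry_le {P Q : Matrix (Fin K) (Fin K) ℝ} (hP : P.PosDef) (hQ : Q.PosDef)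
    (h : (Q - P).PosSemidef) (i : Fin K) : Q⁻¹ i i ≤ P⁻¹ i i := by
  have h2 := (inv_sub_inv_posSemidef hP hQ h).dotProduct_mulVec_nonneg (Pi.single i 1)
  rw [star_trivial, Matrix.sub_mulVec, dotProduct_sub, dot_single, dot_single] at h2
  linarith

lemma exists_loewner_bounds (hK : 0 < K) {A : Matrix (Fin K) (Fin K) ℝ} (hA : A.PosDef) :
    ∃ α β : ℝ, 0 < α ∧ 0 < β ∧ (A - α • 1).PosSemidef ∧ (β • 1 - A).PosSemidef := by
  have hne : Nonempty (Fin K) := ⟨⟨0, hK⟩⟩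
  have hH := hA.1
  set U : Matrix (Fin K) (Fin K) ℝ := (Matrix.IsHermitian.eigenvectorUnitary hH :
    Matrix (Fin K) (Fin K) ℝ) with hUdef
  set ev := hH.eigenvalues with hev
  have hspec : A = U * Matrix.diagonal ev * star U := by
    have := hH.spectral_theorem
    simpa [RCLike.ofReal_real_eq_id] using this
  have hU1 : U * star U = 1 :=
    (Matrix.mem_unitaryGroup_iff).mp (Matrix.IsHermitian.eigenvectorUnitary hH).2
  have hrw : ∀ γ : ℝ, A - γ • 1 = U * Matrix.diagonal (fun i => ev i - γ) * star U := by
    intro γ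
    rw [show (fun i => ev i - γ) = fun i => ev i - (fun _ : Fin K => γ) i from rfl,
      ← Matrix.diagonal_sub, ← Matrix.smul_one_eq_diagonal]
    rw [Matrix.mul_sub, Matrix.sub_mul, ← hspec]
    congr 1
    rw [Matrix.mul_smul, Matrix.mul_one, Matrix.smul_mul, hU1]
  have hrw2 : ∀ γ : ℝ, γ • 1 - A = U * Matrix.diagonal (fun i => γ - ev i) * star U := by
    intro γ
    rw [show (fun i => γ - ev i) = fun i => (fun _ : Fin K => γ) i - ev i from rfl,
      ← Matrix.diagonal_sub, ← Matrix.smul_one_eq_diagonal]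
    rw [Matrix.mul_sub, Matrix.sub_mul, ← hspec]
    congr 1
    rw [Matrix.mul_smul, Matrix.mul_one, Matrix.smul_mul, hU1]
  have hpsd : ∀ d : Fin K → ℝ, (∀ i, 0 ≤ d i) → (U * Matrix.diagonal d * star U).PosSemidef := by
    intro d hd
    rw [Matrix.star_eq_conjTranspose]
    exact (Matrix.PosSemidef.diagonal hd).mul_mul_conjTranspose_same U
  refine ⟨Finset.univ.inf' Finset.univ_nonempty ev, Finset.univ.sup' Finset.univ_nonempty ev,
    ?_, ?_, ?_, ?_⟩
  · exact (Finset.lt_inf'_iff _).mpr fun i _ => hA.eigenvalues_pos i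
  · exact lt_of_lt_of_le (hA.eigenvalues_pos ⟨0, hK⟩)
      (Finset.le_sup' ev (Finset.mem_univ ⟨0, hK⟩))
  · rw [hrw]
    exact hpsd _ fun i => sub_nonneg.mpr (Finset.inf'_le ev (Finset.mem_univ i))
  · rw [hrw2]
    exact hpsd _ fun i => sub_nonneg.mpr (Finset.le_sup' ev (Finset.mem_univ i))


lemma key_eq (hK : 0 < K) (c : Fin N → Fin K → ℝ) {Cov : Matrix (Fin K) (Fin K) ℝ}
    (hCov : Cov.PosDef) {l : Fin N → ℝ} (hl : ∀ i, 0 ≤ l i) {t : ℝ} (ht : 0 < t) :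
    t * postVar hK c Cov (t • l) =
      (infoMat c l + t⁻¹ • Cov⁻¹)⁻¹ ⟨0, hK⟩ ⟨0, hK⟩ := by
  have hA : (Cov⁻¹).PosDef := hCov.inv
  have hM : (infoMat c l).PosSemidef := infoMat_posSemidef c hl
  have hB : (t⁻¹ • Cov⁻¹ + infoMat c l).PosDef :=
    (smul_posDef hA (inv_pos.mpr ht)).add_posSemidef hM
  have h1 : Cov⁻¹ + infoMat c (t • l) = t • (t⁻¹ • Cov⁻¹ + infoMat c l) := by
    rw [infoMat_smul, smul_add, smul_smul, mul_inv_cancel₀ ht.ne', one_smul]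
  rw [postVar, h1]
  have : Invertible t := invertibleOfNonzero ht.ne'
  rw [Matrix.inv_smul (A := t⁻¹ • Cov⁻¹ + infoMat c l) t hB.det_pos.ne'.isUnit, invOf_eq_inv,
    add_comm (t⁻¹ • Cov⁻¹)]
  rw [Matrix.smul_apply, smul_eq_mul, ← mul_assoc, mul_inv_cancel₀ ht.ne', one_mul]

/-- `t·V_{Σ⁰}(t·λ)` converges to `V*(λ)` in `[0,∞]` as the real parameter
`t → ∞`; if `Σᵢ λᵢcᵢcᵢᵀ` is positive definite the limit is `[(Σᵢ λᵢcᵢcᵢᵀ)⁻¹]₁₁`,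
independently of the prior. -/
theorem asymptotic_variance {K N : ℕ} (hK : 0 < K) (hN : 0 < N)
    (c : Fin N → Fin K → ℝ)
    (Cov : Matrix (Fin K) (Fin K) ℝ) (hCov : Cov.PosDef)
    (l : Fin N → ℝ) (hl : ∀ i, 0 ≤ l i) :
    Filter.Tendsto
      (fun t : ℝ => ENNReal.ofReal (t * postVar hK c Cov (t • l)))
      Filter.atTop (𝓝 (Vstar hK c l)) ∧
    ((infoMat c l).PosDef →
      Filter.Tendsto (fun t : ℝ => t * postVar hK c Cov (t • l))
        Filter.atTop (𝓝 ((infoMat c l)⁻¹ ⟨0, hK⟩ ⟨0, hK⟩))) := by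
  set i0 : Fin K := ⟨0, hK⟩ with hi0
  set M := infoMat c l with hMdef
  have hA : (Cov⁻¹).PosDef := hCov.inv
  have hM : M.PosSemidef := infoMat_posSemidef c hl
  obtain ⟨α, β, hα, hβ, hAα, hβA⟩ := exists_loewner_bounds hK hA
  have hMe : ∀ ε : ℝ, 0 < ε → (M + ε • (1 : Matrix (Fin K) (Fin K) ℝ)).PosDef :=
    fun ε hε => Matrix.PosDef.posSemidef_add hM (smul_posDef one_posDef hε)
  have hMA : ∀ ε : ℝ, 0 < ε → (M + ε • Cov⁻¹).PosDef :=
    fun ε hε => Matrix.PosDef.posSemidef_add hM (smul_posDef hA hε)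
  have fa : ∀ ε : ℝ, 0 < ε → (M + ε • Cov⁻¹)⁻¹ i0 i0 ≤ (M + (ε * α) • 1)⁻¹ i0 i0 := by
    intro ε hε
    apply inv_entry_le (hMe _ (mul_pos hε hα)) (hMA ε hε)
    have h : M + ε • Cov⁻¹ - (M + (ε * α) • 1) = ε • (Cov⁻¹ - α • (1 : Matrix (Fin K) (Fin K) ℝ)) := by
      rw [smul_sub, smul_smul, add_sub_add_left_eq_sub]
    rw [h]
    exact smul_posSemidef hAα hε.le
  have fb : ∀ ε : ℝ, 0 < ε → (M + (ε * β) • 1)⁻¹ i0 i0 ≤ (M + ε • Cov⁻¹)⁻¹ i0 i0 := by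
    intro ε hε
    apply inv_entry_le (hMA ε hε) (hMe _ (mul_pos hε hβ))
    have h : M + (ε * β) • 1 - (M + ε • Cov⁻¹) = ε • (β • (1 : Matrix (Fin K) (Fin K) ℝ) - Cov⁻¹) := by
      rw [smul_sub, smul_smul, add_sub_add_left_eq_sub]
    rw [h]
    exact smul_posSemidef hβA hε.le
  have fc : ∀ ε ε' : ℝ, 0 < ε → ε ≤ ε' → (M + ε' • 1)⁻¹ i0 i0 ≤ (M + ε • 1)⁻¹ i0 i0 := by
    intro ε ε' hε hεε'
    apply inv_entry_le (hMe ε hε) (hMe ε' (lt_of_lt_of_le hε hεε'))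
    have h : M + ε' • 1 - (M + ε • 1) = (ε' - ε) • (1 : Matrix (Fin K) (Fin K) ℝ) := by
      rw [add_sub_add_left_eq_sub, ← sub_smul]
    rw [h]
    exact smul_posSemidef one_posDef.posSemidef (sub_nonneg.mpr hεε')
  have fd : ∀ ε : ℝ, 0 < ε →
      ENNReal.ofReal ((M + ε • 1)⁻¹ i0 i0) ≤ Vstar hK c l := by
    intro ε hε
    unfold Vstar
    exact le_iSup_of_le ε (le_iSup_of_le hε le_rfl)
  have hkey : ∀ᶠ t : ℝ in atTop,
      t * postVar hK c Cov (t • l) = (M + t⁻¹ • Cov⁻¹)⁻¹ i0 i0 := by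
    filter_upwards [eventually_gt_atTop 0] with t ht
    exact key_eq hK c hCov hl ht
  constructor
  · refine tendsto_order.2 ⟨fun b hb => ?_, fun b hb => ?_⟩
    · have hb' := hb
      unfold Vstar at hb'
      rw [lt_iSup_iff] at hb'
      obtain ⟨ε, hb'⟩ := hb'
      rw [lt_iSup_iff] at hb'
      obtain ⟨hε, hb'⟩ := hb'
      filter_upwards [eventually_ge_atTop (max 1 (β / ε)), eventually_gt_atTop 0, hkey]
        with t ht1 ht0 hkt
      rw [hkt]
      have htβ : 0 < t⁻¹ * β := mul_pos (inv_pos.mpr ht0) hβ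
      have hβt : β ≤ t * ε := by
        have h1 : β / ε ≤ t := le_trans (le_max_right 1 (β / ε)) ht1
        calc β = (β / ε) * ε := by field_simp
          _ ≤ t * ε := mul_le_mul_of_nonneg_right h1 hε.le
      have hle : t⁻¹ * β ≤ ε := by
        rw [inv_mul_le_iff₀ ht0]
        exact hβt
      calc b < ENNReal.ofReal ((M + ε • 1)⁻¹ i0 i0) := hb'
        _ ≤ ENNReal.ofReal ((M + (t⁻¹ * β) • 1)⁻¹ i0 i0) :=
            ENNReal.ofReal_le_ofReal (fc _ ε htβ hle)
        _ ≤ ENNReal.ofReal ((M + t⁻¹ • Cov⁻¹)⁻¹ i0 i0) :=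
            ENNReal.ofReal_le_ofReal (fb t⁻¹ (inv_pos.mpr ht0))
    · filter_upwards [eventually_gt_atTop 0, hkey] with t ht0 hkt
      rw [hkt]
      calc ENNReal.ofReal ((M + t⁻¹ • Cov⁻¹)⁻¹ i0 i0)
          ≤ ENNReal.ofReal ((M + (t⁻¹ * α) • 1)⁻¹ i0 i0) :=
            ENNReal.ofReal_le_ofReal (fa t⁻¹ (inv_pos.mpr ht0))
        _ ≤ Vstar hK c l := fd _ (mul_pos (inv_pos.mpr ht0) hα)
        _ < b := hb
  · intro hMpd
    have hcont : ContinuousAt (fun B : Matrix (Fin K) (Fin K) ℝ => B⁻¹ i0 i0) M := by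
      have h1 : ContinuousAt Inv.inv M := by
        apply continuousAt_matrix_inv
        rw [Ring.inverse_eq_inv']
        exact continuousAt_inv₀ hMpd.det_pos.ne'
      exact ((Continuous.matrix_elem continuous_id i0 i0).continuousAt).comp h1
    have hpath : Tendsto (fun t : ℝ => M + t⁻¹ • Cov⁻¹) atTop (𝓝 M) := by
      have h2 : Tendsto (fun t : ℝ => t⁻¹ • Cov⁻¹) atTop (𝓝 ((0 : ℝ) • Cov⁻¹)) :=
        tendsto_inv_atTop_zero.smul_const Cov⁻¹
      rw [zero_smul] at h2
      simpa using tendsto_const_nhds.add h2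
    have hT := hcont.tendsto.comp hpath
    exact Tendsto.congr' (hkey.mono fun t h => h.symm) hT

end LearningTraps
end
end

section
/- Suppose N ≥ K, the vectors c₁, …, c_K are linearly independent, and, letting C* be the K×K matrix whose rows are c₁ᵀ, …, c_Kᵀ, suppose β_j := [(C*)⁻¹]_{1j} > 0 for every j ∈ {1,…,K} (equivalently, e₁ = Σ_{j=1}^K β_j·c_j with all β_j > 0). Suppose further that S* = {1,…,K} uniquely minimizes φ among all minimally spanning subsets of {1,…,N}. Then for every i > K, writing cᵢ = Σ_{j=1}^K α_j·c_j (which is the unique such representation), one has |Σ_{j=1}^K α_j| < 1. -/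
open Matrix Finset Filter Topology

noncomputable section

namespace LearningTraps

variable {K N : ℕ}

section CrucialAux

variable {K N : ℕ}

lemma isRep_unique (hK : 0 < K) (c : Fin N → Fin K → ℝ) (S : Finset (Fin N))
    (hind : ∀ g : Fin N → ℝ, (∀ m ∉ S, g m = 0) → (∑ m, g m • c m) = 0 → ∀ m, g m = 0)
    {β β' : Fin N → ℝ} (h1 : IsRep hK c S β) (h2 : IsRep hK c S β') : β = β' := by
  funext m
  have h := hind (fun m => β m - β' m)
    (fun m hm => by show β m - β' m = 0; rw [h1.1 m hm, h2.1 m hm, sub_self])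
    (by simp only [sub_smul, Finset.sum_sub_distrib, h1.2, h2.2, sub_self]) m
  replace h : β m - β' m = 0 := h
  linarith

lemma betaVec_eq_of (hK : 0 < K) (c : Fin N → Fin K → ℝ) (S : Finset (Fin N))
    (hind : ∀ g : Fin N → ℝ, (∀ m ∉ S, g m = 0) → (∑ m, g m • c m) = 0 → ∀ m, g m = 0)
    {β : Fin N → ℝ} (hβ : IsRep hK c S β) : betaVec hK c S = β := by
  classical
  have hex : ∃ b, IsRep hK c S b := ⟨β, hβ⟩
  rw [betaVec, dif_pos hex]
  exact isRep_unique hK c S hind hex.choose_spec hβ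

lemma minSpanning_of (hK : 0 < K) (c : Fin N → Fin K → ℝ) (S : Finset (Fin N))
    (hind : ∀ g : Fin N → ℝ, (∀ m ∉ S, g m = 0) → (∑ m, g m • c m) = 0 → ∀ m, g m = 0)
    {β : Fin N → ℝ} (hβ : IsRep hK c S β) (hne : ∀ m ∈ S, β m ≠ 0) :
    MinSpanning hK c S := by
  constructor
  · rw [Spanning, ← hβ.2, ← Finset.sum_subset (Finset.subset_univ S)
      (fun m _ hm => by rw [hβ.1 m hm, zero_smul])]
    exact Submodule.sum_smul_mem _ _ fun m hm => Submodule.subset_span ⟨m, hm, rfl⟩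
  · intro T hT hsp
    obtain ⟨l, hl, hrep⟩ := (Finsupp.mem_span_image_iff_linearCombination ℝ).mp hsp
    have hl' : ∀ m, m ∉ T → l m = 0 := fun m hm =>
      Finsupp.notMem_support_iff.mp (fun hs => hm ((Finsupp.mem_supported ℝ l).mp hl hs))
    have h2 : IsRep hK c S fun m => l m := by
      refine ⟨fun m hm => hl' m (fun h => hm (hT.subset h)), ?_⟩
      rw [← hrep, Finsupp.linearCombination_apply, Finsupp.sum]
      exact (Finset.sum_subset (Finset.subset_univ l.support)
        (fun m _ hm => by show l m • c m = 0; rw [Finsupp.notMem_support_iff.mp hm, zero_smul])).symm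
    obtain ⟨m, hmS, hmT⟩ := Finset.exists_of_ssubset hT
    have heq := isRep_unique hK c S hind hβ h2
    exact hne m hmS (by rw [heq]; exact hl' m hmT)

lemma sum_split (hKN : K ≤ N) {i : Fin N} (hi : K ≤ (i : ℕ)) {M : Type*} [AddCommMonoid M]
    (F : Fin N → M) (hF : ∀ m : Fin N, m ≠ i → K ≤ (m : ℕ) → F m = 0) :
    ∑ m, F m = F i + ∑ j : Fin K, F (Fin.castLE hKN j) := by
  classical
  have hiS : i ∉ Finset.image (Fin.castLE hKN) Finset.univ := by
    simp only [Finset.mem_image, Finset.mem_univ, true_and, not_exists]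
    intro j hj
    have := congrArg Fin.val hj
    simp only [Fin.coe_castLE] at this
    omega
  have hsub : ∑ m ∈ insert i (Finset.image (Fin.castLE hKN) Finset.univ), F m = ∑ m, F m := by
    refine Finset.sum_subset (Finset.subset_univ _) fun m _ hm => ?_
    simp only [Finset.mem_insert, Finset.mem_image, Finset.mem_univ, true_and, not_or,
      not_exists] at hm
    refine hF m hm.1 ?_
    by_contra h
    push_neg at h
    exact hm.2 ⟨(m : ℕ), h⟩ (Fin.ext rfl)
  rw [← hsub, Finset.sum_insert hiS,
    Finset.sum_image (fun a _ b _ h => Fin.castLE_injective hKN h)]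

end CrucialAux

/-- Crucial lemma. If `c₁,…,c_K` are linearly independent with
`β_j = [(C*)⁻¹]_{1j} > 0` and `S* = {1,…,K}` uniquely minimizes `φ` among minimally
spanning sets, then any other signal `cᵢ = Σⱼ αⱼcⱼ` has `|Σⱼ αⱼ| < 1`. -/
theorem crucial_linear_combination {K N : ℕ} (hK : 0 < K) (hKN : K ≤ N)
    (c : Fin N → Fin K → ℝ)
    (hli : LinearIndependent ℝ fun j : Fin K => c (Fin.castLE hKN j))
    (hpos : ∀ j : Fin K,
      0 < (Matrix.of fun a b : Fin K => c (Fin.castLE hKN a) b)⁻¹ ⟨0, hK⟩ j)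
    (hUM : UniqueMin hK c (Finset.image (Fin.castLE hKN) Finset.univ)) :
    ∀ i : Fin N, K ≤ (i : ℕ) →
      ∀ α : Fin K → ℝ, c i = ∑ j, α j • c (Fin.castLE hKN j) →
        |∑ j, α j| < 1 := by
  classical
  intro i hi α hα
  by_contra hcon
  push_neg at hcon
  set z : Fin K := ⟨0, hK⟩ with hz
  set Cm : Matrix (Fin K) (Fin K) ℝ := Matrix.of fun a b : Fin K => c (Fin.castLE hKN a) b
    with hCm
  set β : Fin K → ℝ := fun j => Cm⁻¹ z j with hβ
  have hliM : LinearIndependent ℝ (fun a : Fin K => Cm a) := hli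
  have hdet : IsUnit Cm := Matrix.linearIndependent_rows_iff_isUnit.mp hliM
  have hinv : Cm⁻¹ * Cm = 1 :=
    Matrix.nonsing_inv_mul Cm ((Matrix.isUnit_iff_isUnit_det Cm).mp hdet)
  have he1 : ∑ j, β j • c (Fin.castLE hKN j) = e1 hK := by
    funext b
    have h1 : (∑ j, β j • c (Fin.castLE hKN j)) b = (Cm⁻¹ * Cm) z b := by
      rw [Matrix.mul_apply, Finset.sum_apply]
      rfl
    rw [h1, hinv]
    simp [e1, Matrix.one_apply, Pi.single_apply, eq_comm, hz]
  have hliK : ∀ g : Fin K → ℝ, (∑ j, g j • c (Fin.castLE hKN j)) = 0 → ∀ j, g j = 0 :=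
    Fintype.linearIndependent_iff.mp hli
  have hβpos : ∀ j, 0 < β j := hpos
  set s : ℝ := ∑ j, α j with hs
  obtain ⟨σ, hσ1, hσs⟩ : ∃ σ : ℝ, (σ = 1 ∨ σ = -1) ∧ 1 ≤ σ * s := by
    rcases le_abs.mp hcon with h | h
    · exact ⟨1, Or.inl rfl, by linarith⟩
    · exact ⟨-1, Or.inr rfl, by linarith⟩
  have hJne : ∃ j, 0 < σ * α j := by
    by_contra h
    push_neg at h
    have : σ * s ≤ 0 := by
      rw [hs, Finset.mul_sum]
      exact Finset.sum_nonpos fun j _ => h j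
    linarith
  set J : Finset (Fin K) := Finset.univ.filter (fun j => 0 < σ * α j) with hJ
  have hJne' : J.Nonempty := by
    obtain ⟨j, hj⟩ := hJne
    exact ⟨j, Finset.mem_filter.mpr ⟨Finset.mem_univ j, hj⟩⟩
  obtain ⟨j0, hj0J, hmin⟩ := J.exists_min_image (fun j => β j / (σ * α j)) hJne'
  have hj0pos : 0 < σ * α j0 := (Finset.mem_filter.mp hj0J).2
  set u : ℝ := β j0 / (σ * α j0) with hu
  have hupos : 0 < u := div_pos (hβpos j0) hj0pos
  set t : ℝ := σ * u with ht
  have htα : ∀ j, t * α j ≤ β j := by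
    intro j
    have heq : t * α j = u * (σ * α j) := by rw [ht]; ring
    rw [heq]
    by_cases hjJ : 0 < σ * α j
    · have hle : u ≤ β j / (σ * α j) := hmin j (Finset.mem_filter.mpr ⟨Finset.mem_univ j, hjJ⟩)
      calc u * (σ * α j) ≤ (β j / (σ * α j)) * (σ * α j) := by nlinarith
        _ = β j := div_mul_cancel₀ _ (ne_of_gt hjJ)
    · push_neg at hjJ
      have h2 : u * (σ * α j) ≤ 0 := mul_nonpos_of_nonneg_of_nonpos hupos.le hjJ
      linarith [hβpos j]
  have htj0 : t * α j0 = β j0 := by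
    have heq : t * α j0 = u * (σ * α j0) := by rw [ht]; ring
    rw [heq, hu, div_mul_cancel₀ _ (ne_of_gt hj0pos)]
  have habs_t : |t| = u := by
    rcases hσ1 with h | h <;> rw [ht, h] <;>
      simp [abs_of_pos hupos, abs_of_neg (by linarith : -u < 0)]
  have hts : u ≤ t * s := by
    have heq : t * s = u * (σ * s) := by rw [ht]; ring
    nlinarith
  have ht0 : t ≠ 0 := fun h => by rw [h, abs_zero] at habs_t; linarith
  -- the new coefficient vector
  set γ : Fin N → ℝ := fun m =>
    if m = i then t else if h : (m : ℕ) < K then β ⟨m, h⟩ - t * α ⟨m, h⟩ else 0 with hγ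
  have hine : ∀ j : Fin K, (Fin.castLE hKN j : Fin N) ≠ i := by
    intro j h
    have := congrArg Fin.val h
    simp only [Fin.coe_castLE] at this
    omega
  have hγcast : ∀ j : Fin K, γ (Fin.castLE hKN j) = β j - t * α j := by
    intro j
    simp only [hγ]
    rw [if_neg (hine j), dif_pos (show ((Fin.castLE hKN j : Fin N) : ℕ) < K from j.isLt)]
    rfl
  have hγi : γ i = t := by simp only [hγ, if_pos rfl]
  have hγ0 : ∀ m : Fin N, m ≠ i → K ≤ (m : ℕ) → γ m = 0 := by
    intro m h1 h2
    simp only [hγ]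
    rw [if_neg h1, dif_neg (not_lt.mpr h2)]
  set S' : Finset (Fin N) := Finset.univ.filter (fun m => γ m ≠ 0) with hS'
  have hγrep : IsRep hK c S' γ := by
    refine ⟨fun m hm => ?_, ?_⟩
    · by_contra h
      exact hm (Finset.mem_filter.mpr ⟨Finset.mem_univ m, h⟩)
    · rw [sum_split hKN hi (fun m => γ m • c m)
        (fun m hm1 hm2 => by show γ m • c m = 0; rw [hγ0 m hm1 hm2, zero_smul])]
      rw [hγi, hα, Finset.smul_sum, ← he1, ← Finset.sum_add_distrib]
      refine Finset.sum_congr rfl fun j _ => ?_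
      rw [hγcast j, smul_smul, ← add_smul]
      congr 1
      ring
  have hj0γ : γ (Fin.castLE hKN j0) = 0 := by rw [hγcast, htj0]; ring
  have hindS' : ∀ g : Fin N → ℝ, (∀ m ∉ S', g m = 0) → (∑ m, g m • c m) = 0 →
      ∀ m, g m = 0 := by
    intro g hg hsum
    have hg0 : ∀ m : Fin N, m ≠ i → K ≤ (m : ℕ) → g m = 0 := by
      intro m h1 h2
      refine hg m fun hm => ?_
      exact (Finset.mem_filter.mp hm).2 (hγ0 m h1 h2)
    rw [sum_split hKN hi (fun m => g m • c m)
      (fun m h1 h2 => by show g m • c m = 0; rw [hg0 m h1 h2, zero_smul])] at hsum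
    rw [hα, Finset.smul_sum, ← Finset.sum_add_distrib] at hsum
    have hcoef : ∀ j, g (Fin.castLE hKN j) + g i * α j = 0 := by
      apply hliK
      rw [← hsum]
      refine Finset.sum_congr rfl fun j _ => ?_
      rw [smul_smul, add_smul, add_comm]
    have hgi : g i = 0 := by
      have h0 := hcoef j0
      have hcz : g (Fin.castLE hKN j0) = 0 :=
        hg _ (fun hm => (Finset.mem_filter.mp hm).2 hj0γ)
      rw [hcz, zero_add] at h0
      have hα0 : α j0 ≠ 0 := by
        intro h
        rw [h, mul_zero] at hj0pos
        exact lt_irrefl 0 hj0pos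
      exact (mul_eq_zero.mp h0).resolve_right hα0
    intro m
    by_cases h1 : m = i
    · rw [h1]; exact hgi
    by_cases h2 : (m : ℕ) < K
    · have h3 := hcoef ⟨(m : ℕ), h2⟩
      have hm : Fin.castLE hKN ⟨(m : ℕ), h2⟩ = m := Fin.ext rfl
      rw [hm, hgi, zero_mul, add_zero] at h3
      exact h3
    · exact hg0 m h1 (le_of_not_gt h2)
  have hminS' : MinSpanning hK c S' :=
    minSpanning_of hK c S' hindS' hγrep (fun m hm => (Finset.mem_filter.mp hm).2)
  have hiS' : i ∈ S' := Finset.mem_filter.mpr ⟨Finset.mem_univ i, by rw [hγi]; exact ht0⟩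
  set Sstar : Finset (Fin N) := Finset.image (Fin.castLE hKN) Finset.univ with hSstar
  have hiSstar : i ∉ Sstar := by
    simp only [hSstar, Finset.mem_image, Finset.mem_univ, true_and, not_exists]
    intro j hj
    have := congrArg Fin.val hj
    simp only [Fin.coe_castLE] at this
    omega
  set βN : Fin N → ℝ := fun m => if h : (m : ℕ) < K then β ⟨m, h⟩ else 0 with hβN
  have hβN0 : ∀ m : Fin N, K ≤ (m : ℕ) → βN m = 0 := by
    intro m h2
    simp only [hβN]
    rw [dif_neg (not_lt.mpr h2)]
  have hβNcast : ∀ j : Fin K, βN (Fin.castLE hKN j) = β j := by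
    intro j
    simp only [hβN]
    rw [dif_pos (show ((Fin.castLE hKN j : Fin N) : ℕ) < K from j.isLt)]
    rfl
  have hβNrep : IsRep hK c Sstar βN := by
    refine ⟨fun m hm => ?_, ?_⟩
    · refine hβN0 m ?_
      by_contra h
      push_neg at h
      exact hm (Finset.mem_image.mpr ⟨⟨(m : ℕ), h⟩, Finset.mem_univ _, Fin.ext rfl⟩)
    · rw [sum_split hKN hi (fun m => βN m • c m)
        (fun m h1 h2 => by show βN m • c m = 0; rw [hβN0 m h2, zero_smul])]
      rw [hβN0 i hi, zero_smul, zero_add, ← he1]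
      exact Finset.sum_congr rfl fun j _ => by rw [hβNcast j]
  have hindS : ∀ g : Fin N → ℝ, (∀ m ∉ Sstar, g m = 0) → (∑ m, g m • c m) = 0 →
      ∀ m, g m = 0 := by
    intro g hg hsum
    have hg0 : ∀ m : Fin N, K ≤ (m : ℕ) → g m = 0 := by
      intro m h2
      refine hg m fun hm => ?_
      obtain ⟨j, _, hj⟩ := Finset.mem_image.mp hm
      have := congrArg Fin.val hj
      simp only [Fin.coe_castLE] at this
      omega
    rw [sum_split hKN hi (fun m => g m • c m)
      (fun m h1 h2 => by show g m • c m = 0; rw [hg0 m h2, zero_smul])] at hsum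
    rw [hg0 i hi, zero_smul, zero_add] at hsum
    have hcoef := hliK _ hsum
    intro m
    by_cases h2 : (m : ℕ) < K
    · have h3 := hcoef ⟨(m : ℕ), h2⟩
      have hm : Fin.castLE hKN ⟨(m : ℕ), h2⟩ = m := Fin.ext rfl
      rwa [hm] at h3
    · exact hg0 m (le_of_not_gt h2)
  have hphiS : phi hK c Sstar = ∑ j, β j := by
    rw [phi, betaVec_eq_of hK c Sstar hindS hβNrep,
      sum_split hKN hi (fun m => |βN m|) (fun m h1 h2 => by show |βN m| = 0; rw [hβN0 m h2, abs_zero]),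
      hβN0 i hi, abs_zero, zero_add]
    exact Finset.sum_congr rfl fun j _ => by rw [hβNcast j, abs_of_pos (hβpos j)]
  have hphiS' : phi hK c S' = u + ((∑ j, β j) - t * s) := by
    rw [phi, betaVec_eq_of hK c S' hindS' hγrep,
      sum_split hKN hi (fun m => |γ m|) (fun m h1 h2 => by show |γ m| = 0; rw [hγ0 m h1 h2, abs_zero]),
      hγi, habs_t]
    congr 1
    have heq : ∑ j, |γ (Fin.castLE hKN j)| = ∑ j, (β j - t * α j) :=
      Finset.sum_congr rfl fun j _ => by
        rw [hγcast j, abs_of_nonneg (by linarith [htα j])]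
    rw [heq, Finset.sum_sub_distrib, ← Finset.mul_sum, ← hs]
  have hneq : S' ≠ Sstar := fun h => hiSstar (h ▸ hiS')
  have hlt := hUM.2 S' hminS' hneq
  rw [hphiS, hphiS'] at hlt
  linarith


end LearningTraps
end
end
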